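/- Let λ ∈ X∨₊ with λ ≠ 0. Then there exist μ ∈ M, an integer k ≥ 0 and short coroots β₁∨, …, βₖ∨ such that λ = μ + β₁∨ + ⋯ + βₖ∨ and every partial sum μ + β₁∨ + ⋯ + βⱼ∨ (for 0 ≤ j ≤ k) is dominant. -/

import Mathlib

open scoped BigOperators Classical

noncomputable section

/-- Data of a finite crystallographic root system in a pair of vector spaces `V`, `V'`
(in perfect duality via `pair`), with a chosen base `Δ` and a cocharacter lattice `X`. -/
structure RootSystemData (V V' : Type) [AddCommGroup V] [Module ℝ V]
    [FiniteDimensional ℝ V] [AddCommGroup V'] [Module ℝ V'] [FiniteDimensional ℝ V'] where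
  /-- The canonical pairing between `V` and `V'`. -/
  pair : V →ₗ[ℝ] V' →ₗ[ℝ] ℝ
  /-- The (finite) set of roots. -/
  R : Finset V
  /-- The coroot attached to a root. -/
  coroot : V → V'
  root_ne_zero : ∀ α ∈ R, α ≠ (0 : V)
  neg_mem : ∀ α ∈ R, -α ∈ R
  coroot_neg : ∀ α ∈ R, coroot (-α) = -coroot α
  pair_self_eq_two : ∀ α ∈ R, pair α (coroot α) = 2
  crystallographic : ∀ α ∈ R, ∀ β ∈ R, ∃ n : ℤ, pair α (coroot β) = (n : ℝ)
  reflect_root_mem : ∀ α ∈ R, ∀ β ∈ R, β - pair β (coroot α) • α ∈ R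
  reflect_coroot_mem : ∀ α ∈ R, ∀ β ∈ R,
    coroot β - pair α (coroot β) • coroot α ∈ coroot '' R
  /-- The chosen base (set of simple roots). -/
  Δ : Finset V
  base_subset : Δ ⊆ R
  base_indep : LinearIndependent ℝ (fun a : (Δ : Set V) => (a : V))
  base_generates : ∀ α ∈ R,
    α ∈ AddSubmonoid.closure (Δ : Set V) ∨ -α ∈ AddSubmonoid.closure (Δ : Set V)
  /-- The lattice `X∨`. -/
  X : AddSubgroup V'
  coroot_mem_X : ∀ α ∈ R, coroot α ∈ X
  X_le_span : (X : Set V') ⊆ (Submodule.span ℝ (coroot '' (R : Set V)) : Set V')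
  pair_X_int : ∀ α ∈ R, ∀ x ∈ X, ∃ n : ℤ, pair α x = (n : ℝ)

namespace RootSystemData

variable {V V' : Type} [AddCommGroup V] [Module ℝ V] [FiniteDimensional ℝ V]
  [AddCommGroup V'] [Module ℝ V'] [FiniteDimensional ℝ V']
  (D : RootSystemData V V')

/-- The set `R₊` of positive roots: roots which are `ℕ`-linear combinations of the base. -/
def Rpos : Finset V := D.R.filter fun α => α ∈ AddSubmonoid.closure (D.Δ : Set V)

/-- The coroot lattice `Q∨`. -/
def Qc : AddSubgroup V' := AddSubgroup.closure (D.coroot '' (D.R : Set V))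

/-- The positive cone `Q∨₊` generated by the coroots of the positive roots. -/
def Qpos : AddSubmonoid V' := AddSubmonoid.closure (D.coroot '' (D.Rpos : Set V))

/-- The dominance order: `ν ≤ λ` iff `λ - ν ∈ Q∨₊`. -/
def leQ (ν lam : V') : Prop := lam - ν ∈ D.Qpos

/-- Dominance: `ν` is dominant iff `⟨α, ν⟩ ≥ 0` for every positive root `α`. -/
def Dominant (ν : V') : Prop := ∀ α ∈ D.Rpos, 0 ≤ D.pair α ν

/-- The set `X∨₊` of dominant elements of the lattice. -/
def Xplus : Set V' := {x | x ∈ D.X ∧ D.Dominant x}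

/-- The set `M` of minimal elements of `X∨₊ \ {0}` for the dominance order. -/
def MSet : Set V' :=
  {μ | μ ∈ D.Xplus ∧ μ ≠ 0 ∧ ∀ ν ∈ D.Xplus, ν ≠ 0 → D.leQ ν μ → ν = μ}

/-- The reflection on `V` attached to a root `α`. -/
def reflV (α : V) (hα : α ∈ D.R) : V ≃ₗ[ℝ] V :=
  Module.reflection (show D.pair.flip (D.coroot α) α = 2 from D.pair_self_eq_two α hα)

/-- The reflection on `V'` attached to a root `α`. -/
def reflV' (α : V) (hα : α ∈ D.R) : V' ≃ₗ[ℝ] V' :=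
  Module.reflection (show D.pair α (D.coroot α) = 2 from D.pair_self_eq_two α hα)

/-- The Weyl group `W`, acting simultaneously on `V` (first component)
and on `V'` (second component); it is generated by the pairs of reflections
attached to the roots. -/
def weyl : Subgroup ((V ≃ₗ[ℝ] V) × (V' ≃ₗ[ℝ] V')) :=
  Subgroup.closure {g | ∃ α, ∃ hα : α ∈ D.R, g = (D.reflV α hα, D.reflV' α hα)}

/-- The orbit `Wμ` of `μ ∈ V'` under the Weyl group. -/
def Worbit (μ : V') : Set V' := {ν | ∃ g ∈ D.weyl, ν = g.2 μ}

/-- The set `Ω(λ) = {ν ∈ X∨ : wν ≤ λ for all w ∈ W}`. -/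
def Omega (lam : V') : Set V' :=
  {ν | ν ∈ D.X ∧ ∀ g ∈ D.weyl, D.leQ (g.2 ν) lam}

/-- Two roots are linked when they are non-orthogonal. -/
def Linked (α β : V) : Prop := α ∈ D.R ∧ β ∈ D.R ∧ D.pair α (D.coroot β) ≠ 0

/-- Two roots lie in the same irreducible component iff they are connected by a
chain of non-orthogonal roots. -/
def SameComponent (α β : V) : Prop := Relation.EqvGen D.Linked α β

/-- The half-sum `ρ` of the positive roots. -/
def rho : V := (2 : ℝ)⁻¹ • ∑ α ∈ D.Rpos, α

/-- A `W`-invariant inner product on `V'`. -/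
structure WInvInner where
  form : V' →ₗ[ℝ] V' →ₗ[ℝ] ℝ
  symm : ∀ x y, form x y = form y x
  posdef : ∀ x, x ≠ 0 → 0 < form x x
  invariant : ∀ g ∈ D.weyl, ∀ x y, form (g.2 x) (g.2 y) = form x y

/-- `β` is a root whose coroot is short: for every `W`-invariant inner product `B` on `V'`,
`B(β∨, β∨) ≤ B(α∨, α∨)` for every root `α` in the same irreducible component as `β`. -/
def IsShortCoroot (β : V) : Prop :=
  β ∈ D.R ∧ ∀ B : D.WInvInner, ∀ α ∈ D.R, D.SameComponent α β →
    B.form (D.coroot β) (D.coroot β) ≤ B.form (D.coroot α) (D.coroot α)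

/-! ### Auxiliary development -/

/-- The model invariant bilinear form. -/
def BB (x y : V') : ℝ := ∑ α ∈ D.R, D.pair α x * D.pair α y

/-- Norm for `BB`. -/
def NN (x : V') : ℝ := D.BB x x

/-- `⟨2ρ, ·⟩`, the height functional. -/
def ht (x : V') : ℝ := ∑ α ∈ D.Rpos, D.pair α x

/-- Reflection of `V` in the root `γ`. -/
def sV (γ a : V) : V := a - D.pair a (D.coroot γ) • γ

/-- Reflection of `V'` in the root `γ`. -/
def sV' (γ : V) (x : V') : V' := x - D.pair γ x • D.coroot γ

/-- An element of the radical. -/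
def Rad (z : V') : Prop := ∀ α ∈ D.R, D.pair α z = 0

def IsZ (r : ℝ) : Prop := ∃ n : ℤ, r = (n : ℝ)

lemma IsZ.add {r s : ℝ} (h : IsZ r) (h' : IsZ s) : IsZ (r + s) := by
  obtain ⟨n, rfl⟩ := h; obtain ⟨m, rfl⟩ := h'; exact ⟨n + m, by push_cast; ring⟩
lemma IsZ.sub {r s : ℝ} (h : IsZ r) (h' : IsZ s) : IsZ (r - s) := by
  obtain ⟨n, rfl⟩ := h; obtain ⟨m, rfl⟩ := h'; exact ⟨n - m, by push_cast; ring⟩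
lemma IsZ.neg {r : ℝ} (h : IsZ r) : IsZ (-r) := by
  obtain ⟨n, rfl⟩ := h; exact ⟨-n, by push_cast; ring⟩
lemma IsZ.one_le {r : ℝ} (h : IsZ r) (h' : 0 < r) : 1 ≤ r := by
  obtain ⟨n, rfl⟩ := h; exact_mod_cast h'
lemma IsZ.le_one {r : ℝ} (h : IsZ r) (h' : r < 2) : r ≤ 1 := by
  obtain ⟨n, rfl⟩ := h
  have h1 : n < 2 := by exact_mod_cast h'
  have h2 : n ≤ 1 := by omega
  exact_mod_cast h2
lemma IsZ.two_le {r : ℝ} (h : IsZ r) (h' : 1 < r) : 2 ≤ r := by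
  obtain ⟨n, rfl⟩ := h; exact_mod_cast h'
lemma IsZ.cases_le_two {r : ℝ} (h : IsZ r) (h' : r ≤ 2) (h'' : 0 < r) : r = 1 ∨ r = 2 := by
  obtain ⟨n, rfl⟩ := h
  have h1 : (1:ℤ) ≤ n := by exact_mod_cast h''
  have h2 : n ≤ 2 := by exact_mod_cast h'
  interval_cases n
  · left; norm_num
  · right; norm_num

variable {D}

lemma Rpos_subset : D.Rpos ⊆ D.R := Finset.filter_subset _ _

lemma mem_Rpos_closure {α : V} (h : α ∈ D.Rpos) :
    α ∈ AddSubmonoid.closure (D.Δ : Set V) := (Finset.mem_filter.1 h).2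

lemma mem_Rpos {α : V} (h1 : α ∈ D.R) (h2 : α ∈ AddSubmonoid.closure (D.Δ : Set V)) :
    α ∈ D.Rpos := Finset.mem_filter.2 ⟨h1, h2⟩

lemma pair_int {γ : V} (hγ : γ ∈ D.R) {x : V'} (hx : x ∈ D.X) : IsZ (D.pair γ x) :=
  D.pair_X_int γ hγ x hx

lemma pair_coroot_int {γ β : V} (hγ : γ ∈ D.R) (hβ : β ∈ D.R) :
    IsZ (D.pair γ (D.coroot β)) := D.crystallographic γ hγ β hβ

lemma coroot_mem_X' {γ : V} (hγ : γ ∈ D.R) : D.coroot γ ∈ D.X := D.coroot_mem_X γ hγ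

/-- ℕ-combination extraction / linear independence: opposite cone elements vanish. -/
lemma closure_indep {x : V} (h1 : x ∈ AddSubmonoid.closure (D.Δ : Set V))
    (h2 : -x ∈ AddSubmonoid.closure (D.Δ : Set V)) : x = 0 := by
  have hsub : AddSubmonoid.closure (D.Δ : Set V) ≤
      (Submodule.span ℕ (D.Δ : Set V)).toAddSubmonoid := by
    rw [AddSubmonoid.closure_le]; exact Submodule.subset_span
  have hx := hsub h1
  have hx' := hsub h2
  rw [Submodule.mem_toAddSubmonoid, Submodule.mem_span_finset] at hx hx'
  obtain ⟨f, -, hf⟩ := hx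
  obtain ⟨g, -, hg⟩ := hx'
  have hsum : ∑ i ∈ D.Δ, ((f i + g i : ℕ) : ℝ) • i = 0 := by
    have : ∑ i ∈ D.Δ, ((f i + g i : ℕ) : ℝ) • i = ∑ i ∈ D.Δ, ((f i + g i) • i) := by
      refine Finset.sum_congr rfl fun i _ => ?_
      rw [← Nat.cast_smul_eq_nsmul ℝ]
    rw [this]
    simp only [add_smul, Finset.sum_add_distrib, hf, hg, add_neg_cancel]
  -- use linear independence
  have key : ∀ i ∈ D.Δ, ((f i + g i : ℕ) : ℝ) = 0 := by
    have h := Fintype.linearIndependent_iff.1 D.base_indep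
      (fun a : (D.Δ : Set V) => ((f a + g a : ℕ) : ℝ)) ?_
    · intro i hi
      exact h ⟨i, by exact_mod_cast hi⟩
    · rw [← hsum]
      rw [← Finset.sum_coe_sort D.Δ (fun i => ((f i + g i : ℕ) : ℝ) • i)]
      rfl
  have hf0 : ∀ i ∈ D.Δ, f i = 0 := by
    intro i hi
    have := key i hi
    have : f i + g i = 0 := by exact_mod_cast this
    omega
  rw [← hf]
  refine Finset.sum_eq_zero fun i hi => ?_
  rw [hf0 i hi, zero_smul]

lemma pos_neg_not_both {α : V} (h1 : α ∈ D.Rpos) (h2 : -α ∈ D.Rpos) : False := by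
  have := closure_indep (mem_Rpos_closure h1) (mem_Rpos_closure h2)
  exact D.root_ne_zero α (Rpos_subset h1) this

lemma neg_mem_Rpos {α : V} (hα : α ∈ D.R) (h : α ∉ D.Rpos) : -α ∈ D.Rpos := by
  rcases D.base_generates α hα with h1 | h2
  · exact absurd (mem_Rpos hα h1) h
  · exact mem_Rpos (D.neg_mem α hα) h2


/-! ### Bilinearity of BB, ht -/

lemma BB_symm (x y : V') : D.BB x y = D.BB y x := by
  unfold BB; exact Finset.sum_congr rfl fun α _ => mul_comm _ _

lemma BB_add_right (x y z : V') : D.BB x (y + z) = D.BB x y + D.BB x z := by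
  unfold BB; rw [← Finset.sum_add_distrib]
  exact Finset.sum_congr rfl fun α _ => by rw [map_add]; ring

lemma BB_sub_right (x y z : V') : D.BB x (y - z) = D.BB x y - D.BB x z := by
  unfold BB; rw [← Finset.sum_sub_distrib]
  exact Finset.sum_congr rfl fun α _ => by rw [map_sub]; ring

lemma BB_smul_right (x : V') (c : ℝ) (y : V') : D.BB x (c • y) = c * D.BB x y := by
  unfold BB; rw [Finset.mul_sum]
  exact Finset.sum_congr rfl fun α _ => by rw [map_smul]; simp [smul_eq_mul]; ring

lemma BB_add_left (x y z : V') : D.BB (x + y) z = D.BB x z + D.BB y z := by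
  rw [BB_symm, BB_add_right, BB_symm z x, BB_symm z y]

lemma BB_sub_left (x y z : V') : D.BB (x - y) z = D.BB x z - D.BB y z := by
  rw [BB_symm, BB_sub_right, BB_symm z x, BB_symm z y]

lemma BB_smul_left (c : ℝ) (x y : V') : D.BB (c • x) y = c * D.BB x y := by
  rw [BB_symm, BB_smul_right, BB_symm]

lemma BB_zero_right (x : V') : D.BB x 0 = 0 := by
  unfold BB; exact Finset.sum_eq_zero fun α _ => by rw [map_zero]; ring

lemma BB_neg_right (x y : V') : D.BB x (-y) = - D.BB x y := by
  have := BB_sub_right (D := D) x 0 y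
  simpa [BB_zero_right] using this

lemma NN_nonneg (x : V') : 0 ≤ D.NN x := by
  unfold NN BB; exact Finset.sum_nonneg fun α _ => mul_self_nonneg _

lemma ht_add (x y : V') : D.ht (x + y) = D.ht x + D.ht y := by
  unfold ht; rw [← Finset.sum_add_distrib]
  exact Finset.sum_congr rfl fun α _ => by rw [map_add]

lemma ht_sub (x y : V') : D.ht (x - y) = D.ht x - D.ht y := by
  unfold ht; rw [← Finset.sum_sub_distrib]
  exact Finset.sum_congr rfl fun α _ => by rw [map_sub]

lemma ht_zero : D.ht 0 = 0 := by
  unfold ht; exact Finset.sum_eq_zero fun α _ => by rw [map_zero]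

lemma ht_neg (x : V') : D.ht (-x) = - D.ht x := by
  have := ht_sub (D := D) 0 x; simpa [ht_zero] using this

lemma ht_int {x : V'} (hx : x ∈ D.X) : IsZ (D.ht x) := by
  unfold ht
  classical
  refine Finset.sum_induction _ IsZ (fun a b ha hb => ha.add hb) ⟨0, by norm_num⟩ ?_
  intro α hα
  exact pair_int (Rpos_subset hα) hx

lemma dominant_ht_nonneg {x : V'} (hx : D.Dominant x) : 0 ≤ D.ht x :=
  Finset.sum_nonneg fun α hα => hx α hα

/-! ### Reflections and invariance -/

lemma pair_sV'_adj (γ a : V) (x : V') :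
    D.pair a (D.sV' γ x) = D.pair (D.sV γ a) x := by
  unfold sV sV'
  simp only [map_sub, map_smul, LinearMap.sub_apply, LinearMap.smul_apply, smul_eq_mul]
  ring

lemma sV_mem {γ a : V} (hγ : γ ∈ D.R) (ha : a ∈ D.R) : D.sV γ a ∈ D.R :=
  D.reflect_root_mem γ hγ a ha

lemma pair_sV_coroot {γ a : V} (hγ : γ ∈ D.R) :
    D.pair (D.sV γ a) (D.coroot γ) = - D.pair a (D.coroot γ) := by
  unfold sV
  rw [map_sub, map_smul]
  simp only [LinearMap.sub_apply, LinearMap.smul_apply, smul_eq_mul,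
    D.pair_self_eq_two γ hγ]
  ring

lemma sV_invol {γ a : V} (hγ : γ ∈ D.R) : D.sV γ (D.sV γ a) = a := by
  have h := pair_sV_coroot (D := D) (a := a) hγ
  unfold sV at h ⊢
  rw [h, neg_smul]
  abel

lemma sum_R_reindex {γ : V} (hγ : γ ∈ D.R) (f : V → ℝ) :
    ∑ α ∈ D.R, f (D.sV γ α) = ∑ α ∈ D.R, f α := by
  refine Finset.sum_nbij' (fun α => D.sV γ α) (fun α => D.sV γ α) ?_ ?_ ?_ ?_ ?_
  · intro a ha; exact sV_mem hγ ha
  · intro a ha; exact sV_mem hγ ha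
  · intro a _; exact sV_invol hγ
  · intro a _; exact sV_invol hγ
  · intro a _; rfl

lemma BB_sV' {γ : V} (hγ : γ ∈ D.R) (x y : V') :
    D.BB (D.sV' γ x) (D.sV' γ y) = D.BB x y := by
  unfold BB
  have : ∀ α, D.pair α (D.sV' γ x) * D.pair α (D.sV' γ y)
      = D.pair (D.sV γ α) x * D.pair (D.sV γ α) y := by
    intro α; rw [pair_sV'_adj, pair_sV'_adj]
  simp only [this]
  exact sum_R_reindex hγ (f := fun α => D.pair α x * D.pair α y)

lemma sV'_coroot_self {γ : V} (hγ : γ ∈ D.R) : D.sV' γ (D.coroot γ) = - D.coroot γ := by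
  unfold sV'
  rw [D.pair_self_eq_two γ hγ]
  rw [two_smul]; abel

/-- The fundamental formula `2⟨β∨, x⟩_B = ⟨β, x⟩ N(β∨)`. -/
lemma BB_coroot {γ : V} (hγ : γ ∈ D.R) (x : V') :
    2 * D.BB (D.coroot γ) x = D.pair γ x * D.NN (D.coroot γ) := by
  have h := BB_sV' hγ (D.coroot γ) x
  rw [sV'_coroot_self hγ] at h
  unfold sV' at h
  rw [BB_sub_right, BB_smul_right] at h
  have hneg : D.BB (-D.coroot γ) (D.coroot γ) = - D.NN (D.coroot γ) := by
    rw [BB_symm, BB_neg_right]; rfl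
  have hneg2 : D.BB (-D.coroot γ) x = - D.BB (D.coroot γ) x := by
    rw [BB_symm, BB_neg_right, BB_symm]
  rw [hneg2, hneg] at h
  linear_combination -h

lemma NN_coroot_pos {γ : V} (hγ : γ ∈ D.R) : 0 < D.NN (D.coroot γ) := by
  have h4 : (4:ℝ) ≤ D.NN (D.coroot γ) := by
    unfold NN BB
    have := Finset.single_le_sum (f := fun α => D.pair α (D.coroot γ) * D.pair α (D.coroot γ))
      (fun i _ => mul_self_nonneg _) hγ
    rw [D.pair_self_eq_two γ hγ] at this
    linarith
  linarith

lemma NN_sV' {γ : V} (hγ : γ ∈ D.R) (x : V') : D.NN (D.sV' γ x) = D.NN x :=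
  BB_sV' hγ x x

lemma coroot_ne_zero {γ : V} (hγ : γ ∈ D.R) : D.coroot γ ≠ 0 := by
  intro h
  have := D.pair_self_eq_two γ hγ
  rw [h, map_zero] at this
  norm_num at this

/-! ### Radical -/

lemma rad_of_NN_zero {z : V'} (h : D.NN z = 0) : D.Rad z := by
  intro α hα
  unfold NN BB at h
  have := (Finset.sum_eq_zero_iff_of_nonneg (fun i _ => mul_self_nonneg (D.pair i z))).1 h α hα
  nlinarith [this]

lemma Rad.BB_zero {z : V'} (h : D.Rad z) (y : V') : D.BB z y = 0 := by
  unfold BB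
  exact Finset.sum_eq_zero fun α hα => by rw [h α hα, zero_mul]

lemma Rad.BB_zero' {z : V'} (h : D.Rad z) (y : V') : D.BB y z = 0 := by
  rw [BB_symm]; exact h.BB_zero y

lemma Rad.ht_zero {z : V'} (h : D.Rad z) : D.ht z = 0 :=
  Finset.sum_eq_zero fun α hα => h α (Rpos_subset hα)

lemma Rad.neg {z : V'} (h : D.Rad z) : D.Rad (-z) := by
  intro α hα; rw [map_neg, h α hα, neg_zero]

lemma Rad.NN_add {z : V'} (h : D.Rad z) (w : V') : D.NN (w + z) = D.NN w := by
  unfold NN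
  rw [BB_add_right, BB_add_left, BB_add_left, h.BB_zero, h.BB_zero', h.BB_zero]
  ring


/-! ### The height of a positive coroot is positive -/

lemma pair_coroot_pos_of_T {γ α : V} (hγ : γ ∈ D.Rpos) (hα : α ∈ D.Rpos)
    (hT : D.sV γ α ∉ D.Rpos) : 0 < D.pair α (D.coroot γ) := by
  by_contra hle
  push_neg at hle
  apply hT
  obtain ⟨n, hn⟩ := pair_coroot_int (Rpos_subset hα) (Rpos_subset hγ)
  have hn0 : n ≤ 0 := by
    rw [hn] at hle; exact_mod_cast hle
  have hmem : D.sV γ α ∈ D.R := sV_mem (Rpos_subset hγ) (Rpos_subset hα)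
  refine mem_Rpos hmem ?_
  have : D.sV γ α = α + (-n).toNat • γ := by
    unfold sV
    rw [hn]
    rw [sub_eq_add_neg, ← neg_smul]
    congr 1
    rw [← Nat.cast_smul_eq_nsmul ℝ]
    congr 1
    exact_mod_cast (by omega : (-n : ℤ) = ((-n).toNat : ℤ))
  rw [this]
  exact AddSubmonoid.add_mem _ (mem_Rpos_closure hα)
    (AddSubmonoid.nsmul_mem _ (mem_Rpos_closure hγ) _)

lemma ht_coroot_ge_one {γ : V} (hγ : γ ∈ D.Rpos) : 1 ≤ D.ht (D.coroot γ) := by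
  classical
  have hγR : γ ∈ D.R := Rpos_subset hγ
  set c := D.coroot γ with hc
  set S := D.Rpos.filter (fun α => D.sV γ α ∈ D.Rpos) with hS
  have hsplit : D.ht c = ∑ α ∈ S, D.pair α c
      + ∑ α ∈ D.Rpos.filter (fun α => ¬ (D.sV γ α ∈ D.Rpos)), D.pair α c := by
    unfold ht
    exact (Finset.sum_filter_add_sum_filter_not _ _ _).symm
  have hS0 : ∑ α ∈ S, D.pair α c = 0 := by
    refine Finset.sum_involution (fun a _ => D.sV γ a) ?_ ?_ ?_ ?_
    · intro a ha
      have := pair_sV_coroot (D := D) (a := a) hγR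
      rw [hc, this]; ring
    · intro a ha hne heq
      apply hne
      have heq' : a - D.pair a (D.coroot γ) • γ = a := heq
      have h2 : D.pair a (D.coroot γ) • γ = 0 := sub_eq_self.mp heq'
      rcases smul_eq_zero.1 h2 with h3 | h3
      · exact h3
      · exact absurd h3 (D.root_ne_zero γ hγR)
    · intro a ha
      have ha' := ha
      rw [hS, Finset.mem_filter] at ha'
      show D.sV γ a ∈ S
      rw [hS, Finset.mem_filter]
      exact ⟨ha'.2, by rw [sV_invol hγR]; exact ha'.1⟩
    · intro a ha
      exact sV_invol hγR
  rw [hsplit, hS0, zero_add]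
  have hγT : γ ∈ D.Rpos.filter (fun α => ¬ (D.sV γ α ∈ D.Rpos)) := by
    rw [Finset.mem_filter]
    refine ⟨hγ, ?_⟩
    have : D.sV γ γ = -γ := by
      unfold sV
      rw [D.pair_self_eq_two γ hγR, two_smul]
      abel
    rw [this]
    intro hneg
    exact pos_neg_not_both hγ hneg
  have hterms : ∀ α ∈ D.Rpos.filter (fun α => ¬ (D.sV γ α ∈ D.Rpos)),
      0 ≤ D.pair α c := by
    intro α hα
    rw [Finset.mem_filter] at hα
    exact le_of_lt (pair_coroot_pos_of_T hγ hα.1 hα.2)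
  calc (1:ℝ) ≤ D.pair γ c := by rw [hc, D.pair_self_eq_two γ hγR]; norm_num
  _ ≤ _ := Finset.single_le_sum hterms hγT

/-! ### Qpos lemmas -/

lemma Qpos_subset_X {q : V'} (hq : q ∈ D.Qpos) : q ∈ D.X := by
  induction hq using AddSubmonoid.closure_induction with
  | mem x hx =>
    obtain ⟨γ, hγ, rfl⟩ := hx
    exact D.coroot_mem_X γ (Rpos_subset (by exact_mod_cast hγ))
  | zero => exact D.X.zero_mem
  | add x y _ _ hx hy => exact D.X.add_mem hx hy

lemma Qpos_ht_nonneg {q : V'} (hq : q ∈ D.Qpos) : 0 ≤ D.ht q := by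
  induction hq using AddSubmonoid.closure_induction with
  | mem x hx =>
    obtain ⟨γ, hγ, rfl⟩ := hx
    have := ht_coroot_ge_one (D := D) (by exact_mod_cast hγ)
    linarith
  | zero => rw [ht_zero]
  | add x y _ _ hx hy => rw [ht_add]; linarith

lemma Qpos_eq_zero_of_ht {q : V'} (hq : q ∈ D.Qpos) (h : D.ht q = 0) : q = 0 := by
  induction hq using AddSubmonoid.closure_induction with
  | mem x hx =>
    obtain ⟨γ, hγ, rfl⟩ := hx
    have := ht_coroot_ge_one (D := D) (by exact_mod_cast hγ)
    linarith
  | zero => rfl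
  | add x y hx' hy' hx hy =>
    rw [ht_add] at h
    have h1 := Qpos_ht_nonneg (D := D) hx'
    have h2 := Qpos_ht_nonneg (D := D) hy'
    have : D.ht x = 0 := by linarith
    have hy0 : D.ht y = 0 := by linarith
    rw [hx this, hy hy0, add_zero]

lemma Qpos_supp {q : V'} (hq : q ∈ D.Qpos) :
    ∀ x : V', 0 < D.BB x q → ∃ γ ∈ D.Rpos, 0 < D.BB x (D.coroot γ) ∧
      q - D.coroot γ ∈ D.Qpos := by
  induction hq using AddSubmonoid.closure_induction with
  | mem z hz =>
    obtain ⟨γ, hγ, rfl⟩ := hz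
    intro x hx
    exact ⟨γ, by exact_mod_cast hγ, hx, by rw [sub_self]; exact D.Qpos.zero_mem⟩
  | zero =>
    intro x hx
    rw [BB_zero_right] at hx
    norm_num at hx
  | add a b ha' hb' ha hb =>
    intro x hx
    rw [BB_add_right] at hx
    by_cases h1 : 0 < D.BB x a
    · obtain ⟨γ, h2, h3, h4⟩ := ha x h1
      refine ⟨γ, h2, h3, ?_⟩
      have : a + b - D.coroot γ = (a - D.coroot γ) + b := by abel
      rw [this]
      exact D.Qpos.add_mem h4 hb'
    · push_neg at h1
      obtain ⟨γ, h2, h3, h4⟩ := hb x (by linarith)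
      refine ⟨γ, h2, h3, ?_⟩
      have : a + b - D.coroot γ = a + (b - D.coroot γ) := by abel
      rw [this]
      exact D.Qpos.add_mem ha' h4

lemma BB_dominant_Qpos {x q : V'} (hx : D.Dominant x) (hq : q ∈ D.Qpos) :
    0 ≤ D.BB x q := by
  induction hq using AddSubmonoid.closure_induction with
  | mem z hz =>
    obtain ⟨γ, hγ, rfl⟩ := hz
    have hγ' : γ ∈ D.Rpos := by exact_mod_cast hγ
    have h := BB_coroot (D := D) (Rpos_subset hγ') x
    have h2 : 0 ≤ D.pair γ x := hx γ hγ'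
    have h3 := NN_coroot_pos (D := D) (Rpos_subset hγ')
    rw [BB_symm]
    nlinarith
  | zero => rw [BB_zero_right]
  | add a b _ _ ha hb => rw [BB_add_right]; linarith


/-! ### Linkage -/

lemma Linked.BB_ne {α β : V} (h : D.Linked α β) :
    D.BB (D.coroot α) (D.coroot β) ≠ 0 := by
  obtain ⟨hα, hβ, hp⟩ := h
  have hf := BB_coroot (D := D) hα (D.coroot β)
  intro h0
  rw [h0, mul_zero] at hf
  have := NN_coroot_pos (D := D) hα
  have : D.pair α (D.coroot β) = 0 := by
    rcases mul_eq_zero.1 hf.symm with h1 | h1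
    · exact h1
    · linarith
  exact hp this

lemma linked_of_BB {α β : V} (hα : α ∈ D.R) (hβ : β ∈ D.R)
    (h : D.BB (D.coroot α) (D.coroot β) ≠ 0) : D.Linked α β := by
  refine ⟨hα, hβ, fun h0 => h ?_⟩
  have hf := BB_coroot (D := D) hα (D.coroot β)
  rw [h0, zero_mul] at hf
  linarith

lemma Linked.symm' {α β : V} (h : D.Linked α β) : D.Linked β α := by
  refine linked_of_BB h.2.1 h.1 ?_
  rw [BB_symm]
  exact h.BB_ne

lemma SameComponent.refl' (α : V) : D.SameComponent α α := Relation.EqvGen.refl α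

lemma SameComponent.symm'' {α β : V} (h : D.SameComponent α β) : D.SameComponent β α :=
  Relation.EqvGen.symm _ _ h

lemma SameComponent.trans'' {α β γ : V} (h : D.SameComponent α β)
    (h' : D.SameComponent β γ) : D.SameComponent α γ :=
  Relation.EqvGen.trans _ _ _ h h'

lemma Linked.sameComponent {α β : V} (h : D.Linked α β) : D.SameComponent α β :=
  Relation.EqvGen.rel _ _ h

/-! ### Fact A: pairing bounds against a not-longer coroot -/

lemma factA {ε γ : V} (hε : ε ∈ D.R) (hγ : γ ∈ D.R)
    (hN : D.NN (D.coroot γ) ≤ D.NN (D.coroot ε))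
    (hB : 0 < D.BB (D.coroot ε) (D.coroot γ)) :
    D.pair ε (D.coroot γ) ≤ 2 ∧
      (D.pair ε (D.coroot γ) = 2 →
        D.Rad (D.coroot γ - D.coroot ε) ∧ D.NN (D.coroot γ) = D.NN (D.coroot ε)) := by
  set m := D.pair ε (D.coroot γ) with hm
  have hform : 2 * D.BB (D.coroot ε) (D.coroot γ) = m * D.NN (D.coroot ε) :=
    BB_coroot hε _
  have hNe := NN_coroot_pos (D := D) hε
  have hNγ := NN_coroot_pos (D := D) hγ
  have hform2 := hform
  unfold NN at hform2
  have hexp : D.NN (D.coroot γ - D.coroot ε)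
      = D.NN (D.coroot γ) - m * D.NN (D.coroot ε) + D.NN (D.coroot ε) := by
    unfold NN
    rw [BB_sub_left, BB_sub_right, BB_sub_right]
    have h1 : D.BB (D.coroot γ) (D.coroot ε) = D.BB (D.coroot ε) (D.coroot γ) := BB_symm _ _
    linarith [hform2]
  have hge := NN_nonneg (D := D) (D.coroot γ - D.coroot ε)
  have hint : IsZ m := pair_coroot_int hε hγ
  constructor
  · by_contra hgt
    push_neg at hgt
    have h3 : 3 ≤ m := by
      obtain ⟨n, hn⟩ := hint
      rw [hn] at hgt ⊢
      have : (2:ℤ) < n := by exact_mod_cast hgt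
      exact_mod_cast this
    nlinarith
  · intro h2
    rw [h2] at hexp
    have h0 : D.NN (D.coroot γ - D.coroot ε) = 0 := by linarith
    exact ⟨rad_of_NN_zero h0, by linarith⟩

/-! ### From a strictly shorter root in the same component to a linked one -/

private lemma chain_aux {γ0 : V} (hγ0 : γ0 ∈ D.R) :
    ∀ (l : List V) (z : V), z ∈ D.R →
      D.NN (D.coroot z) < D.NN (D.coroot γ0) →
      List.Chain D.Linked z (l ++ [γ0]) →
      ∃ a ∈ D.R, D.Linked a γ0 ∧ D.NN (D.coroot a) < D.NN (D.coroot γ0) := by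
  intro l
  induction l with
  | nil =>
    intro z hz hN hch
    rw [List.nil_append, List.Chain, List.chain_cons] at hch
    exact ⟨z, hz, hch.1, hN⟩
  | cons w t ih =>
    intro z hz hN hch
    rw [List.cons_append, List.Chain, List.chain_cons] at hch
    obtain ⟨hzw, hch'⟩ := hch
    -- the head of t ++ [γ0]
    have hu : ∃ u rest, t ++ [γ0] = u :: rest ∧ List.Chain D.Linked u rest ∧ D.Linked w u ∧
        u ∈ D.R := by
      cases t with
      | nil =>
        rw [List.nil_append, List.chain_cons] at hch'
        exact ⟨γ0, [], rfl, List.Chain.nil, hch'.1, hγ0⟩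
      | cons u t' =>
        rw [List.cons_append, List.chain_cons] at hch'
        exact ⟨u, t' ++ [γ0], rfl, hch'.2, hch'.1, hch'.1.2.1⟩
    obtain ⟨u, rest, hrest, hchu, hwu, huR⟩ := hu
    by_cases hlink : D.Linked z u
    · -- drop w
      cases t with
      | nil =>
        -- then u = γ0
        rw [List.nil_append] at hrest
        rw [List.cons_eq_cons] at hrest
        rw [← hrest.1] at hlink
        exact ⟨z, hz, hlink, hN⟩
      | cons u' t' =>
        rw [List.cons_append, List.cons_eq_cons] at hrest
        have hu' : u' = u := hrest.1
        have hrest' : t' ++ [γ0] = rest := hrest.2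
        refine ih z hz hN ?_
        rw [List.cons_append, hu', List.Chain, List.chain_cons, hrest']
        exact ⟨hlink, hchu⟩
    · -- reflect z in w
      have hwz : D.Linked w z := hzw.symm'
      have hwR : w ∈ D.R := hzw.2.1
      obtain ⟨ε, hεR, hεc⟩ := D.reflect_coroot_mem w hwR z hz
      have hεc' : D.coroot ε = D.sV' w (D.coroot z) := by
        rw [hεc]; rfl
      have hNε : D.NN (D.coroot ε) < D.NN (D.coroot γ0) := by
        rw [hεc', NN_sV' hwR]; exact hN
      have hBzu : D.BB (D.coroot z) (D.coroot u) = 0 := by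
        by_contra hne
        exact hlink (linked_of_BB hz huR hne)
      have hBεu : D.BB (D.coroot ε) (D.coroot u) ≠ 0 := by
        rw [hεc']
        unfold sV'
        rw [BB_sub_left, BB_smul_left, hBzu]
        rw [zero_sub, neg_ne_zero]
        exact mul_ne_zero (fun h => hwz.2.2 h) hwu.BB_ne
      have hlinkεu : D.Linked ε u := linked_of_BB hεR huR hBεu
      -- recurse
      cases t with
      | nil =>
        rw [List.nil_append] at hrest
        rw [List.cons_eq_cons] at hrest
        rw [← hrest.1] at hlinkεu
        exact ⟨ε, hεR, hlinkεu, hNε⟩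
      | cons u' t' =>
        rw [List.cons_append, List.cons_eq_cons] at hrest
        have hu' : u' = u := hrest.1
        have hrest' : t' ++ [γ0] = rest := hrest.2
        refine ih ε hεR hNε ?_
        rw [List.cons_append, hu', List.Chain, List.chain_cons, hrest']
        exact ⟨hlinkεu, hchu⟩

lemma SameComponent.rtg {α β : V} (h : D.SameComponent α β) :
    Relation.ReflTransGen D.Linked α β := by
  induction h with
  | rel x y h' => exact Relation.ReflTransGen.single h'
  | refl => exact Relation.ReflTransGen.refl
  | symm x y _ ih =>
    exact @Std.Symm.symm _ _ (@Relation.ReflTransGen.stdSymm _ _ ⟨fun a b h => h.symm'⟩) _ _ ih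
  | trans x y z _ _ ih1 ih2 => exact ih1.trans ih2

private lemma rtg_chain (D : RootSystemData V V') {a b : V}
    (h : Relation.ReflTransGen D.Linked a b) :
    a = b ∨ ∃ l, List.Chain D.Linked a (l ++ [b]) := by
  induction h using Relation.ReflTransGen.head_induction_on with
  | refl => left; rfl
  | head hax hxb ih =>
    rcases ih with rfl | ⟨l, hl⟩
    · right
      exact ⟨[], by rw [List.nil_append, List.Chain, List.chain_cons]; exact ⟨hax, List.Chain.nil⟩⟩
    · right
      exact ⟨_ :: l, by rw [List.cons_append, List.Chain, List.chain_cons]; exact ⟨hax, hl⟩⟩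

lemma exists_linked_shorter {γ0 δ : V} (hγ0 : γ0 ∈ D.R) (hδ : δ ∈ D.R)
    (hcomp : D.SameComponent δ γ0)
    (hN : D.NN (D.coroot δ) < D.NN (D.coroot γ0)) :
    ∃ a ∈ D.R, D.Linked a γ0 ∧ D.NN (D.coroot a) < D.NN (D.coroot γ0) := by
  have hrtg : Relation.ReflTransGen D.Linked δ γ0 := hcomp.rtg
  rcases rtg_chain D hrtg with rfl | ⟨l, hl⟩
  · exact absurd hN (lt_irrefl _)
  · exact chain_aux hγ0 l δ hδ hN hl

lemma NN_neg (x : V') : D.NN (-x) = D.NN x := by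
  unfold NN
  rw [BB_neg_right, BB_symm, BB_neg_right, BB_symm]
  ring

lemma pair_neg_left (α : V) (x : V') : D.pair (-α) x = - D.pair α x := by
  rw [map_neg]; rfl

/-! ### Selection of a component-short root pairing `≥ 2` with `lam` -/

lemma exists_short_A2 {lam : V'} (hlamX : lam ∈ D.X)
    (h : ∃ γ ∈ D.R, 2 ≤ D.pair γ lam) :
    ∃ γ ∈ D.R, 2 ≤ D.pair γ lam ∧
      ∀ δ ∈ D.R, D.SameComponent δ γ → D.NN (D.coroot γ) ≤ D.NN (D.coroot δ) := by
  classical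
  set A2 := D.R.filter (fun γ => 2 ≤ D.pair γ lam) with hA2
  obtain ⟨γ1, hγ1R, hγ1p⟩ := h
  have hne : A2.Nonempty := ⟨γ1, Finset.mem_filter.2 ⟨hγ1R, hγ1p⟩⟩
  obtain ⟨γ, hγA, hmin⟩ := Finset.exists_min_image A2 (fun γ => D.NN (D.coroot γ)) hne
  rw [hA2, Finset.mem_filter] at hγA
  refine ⟨γ, hγA.1, hγA.2, ?_⟩
  by_contra hbad
  push_neg at hbad
  obtain ⟨δ, hδR, hδcomp, hδN⟩ := hbad
  obtain ⟨a0, ha0R, ha0link, ha0N⟩ := exists_linked_shorter hγA.1 hδR hδcomp hδN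
  -- orient a0 to pair nonneg with lam
  have key : ∀ a ∈ D.R, D.Linked a γ → D.NN (D.coroot a) < D.NN (D.coroot γ) →
      0 ≤ D.pair a lam → False := by
    intro a haR halink haN hpa
    have hint := pair_int (D := D) haR hlamX
    by_cases h2 : 2 ≤ D.pair a lam
    · -- a itself is in A2, shorter
      have : a ∈ A2 := Finset.mem_filter.2 ⟨haR, h2⟩
      have := hmin a this
      linarith
    · push_neg at h2
      have hpa1 : D.pair a lam ≤ 1 := hint.le_one h2
      -- reflect a in γ
      set t := D.pair γ (D.coroot a) with ht
      have htne : t ≠ 0 := by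
        intro h0
        have hf := BB_coroot (D := D) hγA.1 (D.coroot a)
        rw [← ht, h0, zero_mul] at hf
        have : D.BB (D.coroot a) (D.coroot γ) = 0 := by
          rw [BB_symm]; linarith
        exact halink.BB_ne this
      have htint : IsZ t := pair_coroot_int hγA.1 haR
      obtain ⟨δx, hδxR, hδxc⟩ := D.reflect_coroot_mem γ hγA.1 a haR
      have hδxc' : D.coroot δx = D.sV' γ (D.coroot a) := by rw [hδxc]; rfl
      have hNx : D.NN (D.coroot δx) = D.NN (D.coroot a) := by
        rw [hδxc', NN_sV' hγA.1]
      -- compute pairing of δx with lam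
      have hBx : 2 * D.BB (D.coroot δx) lam
          = D.pair a lam * D.NN (D.coroot a) - t * (D.pair γ lam * D.NN (D.coroot γ)) := by
        rw [hδxc']
        unfold sV'
        rw [BB_sub_left, BB_smul_left, ← ht]
        have h1 := BB_coroot (D := D) haR lam
        have h2 := BB_coroot (D := D) hγA.1 lam
        linear_combination h1 - t * h2
      have hfx : 2 * D.BB (D.coroot δx) lam = D.pair δx lam * D.NN (D.coroot δx) :=
        BB_coroot hδxR lam
      rw [hNx] at hfx
      have heq : D.pair δx lam * D.NN (D.coroot a)
          = D.pair a lam * D.NN (D.coroot a) - t * (D.pair γ lam * D.NN (D.coroot γ)) := by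
        linarith
      have hNa := NN_coroot_pos (D := D) haR
      have hNγ := NN_coroot_pos (D := D) hγA.1
      have hF : 2 ≤ D.pair γ lam := hγA.2
      rcases lt_or_gt_of_ne htne with htneg | htpos
      · -- t ≤ -1 : δx ∈ A2 and shorter
        have ht1 : t ≤ -1 := by
          obtain ⟨n, hn⟩ := htint
          rw [hn] at htneg ⊢
          have : n < 0 := by exact_mod_cast htneg
          have : n ≤ -1 := by omega
          exact_mod_cast this
        have hXle : 2 * D.NN (D.coroot γ) ≤ D.pair γ lam * D.NN (D.coroot γ) :=
          mul_le_mul_of_nonneg_right hF (le_of_lt hNγ)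
        have hXpos : 0 < D.pair γ lam * D.NN (D.coroot γ) := by linarith
        have h3 : t * (D.pair γ lam * D.NN (D.coroot γ))
            ≤ (-1) * (D.pair γ lam * D.NN (D.coroot γ)) :=
          mul_le_mul_of_nonneg_right ht1 (le_of_lt hXpos)
        have h5 : 0 ≤ D.pair a lam * D.NN (D.coroot a) :=
          mul_nonneg hpa (le_of_lt hNa)
        have h6 : 2 * D.NN (D.coroot a) < D.pair δx lam * D.NN (D.coroot a) := by
          linarith
        have hbig : 2 < D.pair δx lam := (mul_lt_mul_iff_left₀ hNa).1 h6
        have : δx ∈ A2 := Finset.mem_filter.2 ⟨hδxR, le_of_lt hbig⟩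
        have := hmin δx this
        rw [hNx] at this
        linarith
      · -- t ≥ 1 : -δx ∈ A2 and shorter
        have ht1 : 1 ≤ t := htint.one_le htpos
        have hXle : 2 * D.NN (D.coroot γ) ≤ D.pair γ lam * D.NN (D.coroot γ) :=
          mul_le_mul_of_nonneg_right hF (le_of_lt hNγ)
        have hXpos : 0 < D.pair γ lam * D.NN (D.coroot γ) := by linarith
        have h3 : (1:ℝ) * (D.pair γ lam * D.NN (D.coroot γ))
            ≤ t * (D.pair γ lam * D.NN (D.coroot γ)) :=
          mul_le_mul_of_nonneg_right ht1 (le_of_lt hXpos)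
        have h4 : D.pair a lam * D.NN (D.coroot a) ≤ 1 * D.NN (D.coroot a) :=
          mul_le_mul_of_nonneg_right hpa1 (le_of_lt hNa)
        have h5 : D.pair δx lam * D.NN (D.coroot a) < (-1) * D.NN (D.coroot a) := by
          linarith
        have hsmall : D.pair δx lam < -1 := (mul_lt_mul_iff_left₀ hNa).1 h5
        have hnδx : -δx ∈ D.R := D.neg_mem δx hδxR
        have hpneg : 2 ≤ D.pair (-δx) lam := by
          rw [pair_neg_left]
          have : IsZ (D.pair δx lam) := pair_int hδxR hlamX
          have := this.neg
          refine this.two_le ?_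
          linarith
        have : -δx ∈ A2 := Finset.mem_filter.2 ⟨hnδx, hpneg⟩
        have hmin' := hmin (-δx) this
        rw [D.coroot_neg δx hδxR, NN_neg, hNx] at hmin'
        linarith
  -- apply key to the right orientation of a0
  by_cases hsign : 0 ≤ D.pair a0 lam
  · exact key a0 ha0R ha0link ha0N hsign
  · push_neg at hsign
    refine key (-a0) (D.neg_mem a0 ha0R) ?_ ?_ ?_
    · -- -a0 linked to γ
      refine ⟨D.neg_mem a0 ha0R, hγA.1, ?_⟩
      rw [pair_neg_left, neg_ne_zero]
      exact ha0link.2.2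
    · rw [D.coroot_neg a0 ha0R, NN_neg]
      exact ha0N
    · rw [pair_neg_left]
      linarith

/-! ### The dominant descent step -/

lemma exists_dominant_step {lam : V'} (hlamX : lam ∈ D.X) (hdom : D.Dominant lam)
    (h : ∃ γ ∈ D.R, 2 ≤ D.pair γ lam) :
    ∃ c ∈ D.R, 2 ≤ D.pair c lam ∧ D.Dominant (lam - D.coroot c) ∧
      (∀ δ ∈ D.R, D.SameComponent δ c → D.NN (D.coroot c) ≤ D.NN (D.coroot δ)) := by
  classical
  obtain ⟨γs, hγsR, hγsp, hγsshort⟩ := exists_short_A2 hlamX h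
  set T := D.R.filter
    (fun γ => D.SameComponent γ γs ∧ D.NN (D.coroot γ) = D.NN (D.coroot γs)) with hT
  have hγsT : γs ∈ T := Finset.mem_filter.2 ⟨hγsR, SameComponent.refl' γs, rfl⟩
  obtain ⟨γm, hγmT, hγmmax⟩ := Finset.exists_max_image T (fun γ => D.pair γ lam) ⟨γs, hγsT⟩
  set F := D.pair γm lam with hF
  have hF2 : 2 ≤ F := le_trans hγsp (hγmmax γs hγsT)
  set T' := T.filter (fun γ => D.pair γ lam = F) with hT'
  have hγmT' : γm ∈ T' := Finset.mem_filter.2 ⟨hγmT, rfl⟩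
  obtain ⟨c, hcT', hcmin⟩ := Finset.exists_min_image T' (fun γ => D.ht (D.coroot γ)) ⟨γm, hγmT'⟩
  rw [hT', Finset.mem_filter] at hcT'
  obtain ⟨hcT, hcF⟩ := hcT'
  rw [hT, Finset.mem_filter] at hcT
  obtain ⟨hcR, hccomp, hcN⟩ := hcT
  have hshort : ∀ δ ∈ D.R, D.SameComponent δ c → D.NN (D.coroot c) ≤ D.NN (D.coroot δ) := by
    intro δ hδR hδcomp
    rw [hcN]
    exact hγsshort δ hδR (hδcomp.trans'' hccomp)
  refine ⟨c, hcR, by rw [hcF]; exact hF2, ?_, hshort⟩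
  -- dominance of lam - coroot c
  intro α hαpos
  by_contra hneg
  push_neg at hneg
  rw [map_sub] at hneg
  have hαR : α ∈ D.R := Rpos_subset hαpos
  have hm1 : D.pair α lam < D.pair α (D.coroot c) := by
    have := hneg
    linarith
  have hαlam : 0 ≤ D.pair α lam := hdom α hαpos
  have hmpos : 0 < D.pair α (D.coroot c) := lt_of_le_of_lt hαlam hm1
  have hmint : IsZ (D.pair α (D.coroot c)) := pair_coroot_int hαR hcR
  have hBαc : 0 < D.BB (D.coroot α) (D.coroot c) := by
    have hf := BB_coroot (D := D) hαR (D.coroot c)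
    have := NN_coroot_pos (D := D) hαR
    nlinarith
  have hlinkαc : D.Linked α c := linked_of_BB hαR hcR (ne_of_gt hBαc)
  have hNαc : D.NN (D.coroot c) ≤ D.NN (D.coroot α) :=
    hshort α hαR hlinkαc.sameComponent
  obtain ⟨hm2, hrad⟩ := factA hαR hcR hNαc hBαc
  have hNα := NN_coroot_pos (D := D) hαR
  have hNc := NN_coroot_pos (D := D) hcR
  rcases hmint.cases_le_two hm2 hmpos with hm1' | hm2'
  · -- m = 1 : reflect and contradict ht-minimality
    have hα0 : D.pair α lam = 0 := by
      have h1 : D.pair α lam < 1 := by rw [← hm1']; exact hm1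
      have := (pair_int hαR hlamX)
      obtain ⟨n, hn⟩ := this
      rw [hn] at h1 hαlam ⊢
      have : n < 1 := by exact_mod_cast h1
      have : (0:ℤ) ≤ n := by exact_mod_cast hαlam
      have : n = 0 := by omega
      rw [this]; norm_num
    obtain ⟨δ, hδR, hδc⟩ := D.reflect_coroot_mem α hαR c hcR
    have hδc' : D.coroot δ = D.sV' α (D.coroot c) := by rw [hδc]; rfl
    have hNδ : D.NN (D.coroot δ) = D.NN (D.coroot c) := by
      rw [hδc', NN_sV' hαR]
    have hBαlam : D.BB (D.coroot α) lam = 0 := by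
      have hf := BB_coroot (D := D) hαR lam
      rw [hα0, zero_mul] at hf
      linarith
    have hpδ : D.pair δ lam = F := by
      have hfδ := BB_coroot (D := D) hδR lam
      have hfc := BB_coroot (D := D) hcR lam
      have hBδ : D.BB (D.coroot δ) lam = D.BB (D.coroot c) lam := by
        rw [hδc']
        unfold sV'
        rw [BB_sub_left, BB_smul_left, hBαlam]
        ring
      rw [hBδ, hNδ] at hfδ
      rw [hcF] at hfc
      have : D.pair δ lam * D.NN (D.coroot c) = F * D.NN (D.coroot c) := by
        linarith
      exact mul_right_cancel₀ (ne_of_gt hNc) this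
    have hBδα : D.BB (D.coroot δ) (D.coroot α) ≠ 0 := by
      rw [hδc']
      unfold sV'
      rw [BB_sub_left, BB_smul_left, hm1', one_mul]
      have h1 : D.BB (D.coroot c) (D.coroot α) = D.BB (D.coroot α) (D.coroot c) := BB_symm _ _
      have h2 : 2 * D.BB (D.coroot α) (D.coroot c)
          = D.pair α (D.coroot c) * D.NN (D.coroot α) := BB_coroot hαR _
      rw [hm1', one_mul] at h2
      intro h0
      unfold NN at h2
      rw [h1] at h0
      have h3 : D.BB (D.coroot α) (D.coroot c) = D.BB (D.coroot α) (D.coroot α) := by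
        rw [sub_eq_zero] at h0
        exact h0
      unfold NN at hNα
      linarith
    have hlinkδα : D.Linked δ α := linked_of_BB hδR hαR hBδα
    have hδT' : δ ∈ T' := by
      rw [hT', Finset.mem_filter, hT, Finset.mem_filter]
      refine ⟨⟨hδR, ?_, by rw [hNδ, hcN]⟩, hpδ⟩
      exact (hlinkδα.sameComponent.trans'' (hlinkαc.sameComponent)).trans'' hccomp
    have hhtδ := hcmin δ hδT'
    have hhtcalc : D.ht (D.coroot δ) = D.ht (D.coroot c) - D.ht (D.coroot α) := by
      rw [hδc']
      unfold sV'
      rw [hm1', one_smul, ht_sub]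
    have hhtα := ht_coroot_ge_one (D := D) hαpos
    rw [hhtcalc] at hhtδ
    linarith
  · -- m = 2 : radical equivalence, contradiction with pairing
    obtain ⟨hradz, hNeq⟩ := hrad hm2'
    have h1 : D.BB (D.coroot α) lam = D.BB (D.coroot c) lam := by
      have : D.BB (D.coroot c - D.coroot α) lam = 0 := hradz.BB_zero lam
      rw [BB_sub_left] at this
      linarith
    have hfα := BB_coroot (D := D) hαR lam
    have hfc := BB_coroot (D := D) hcR lam
    rw [h1] at hfα
    rw [hcF] at hfc
    have : D.pair α lam * D.NN (D.coroot α) = F * D.NN (D.coroot c) := by linarith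
    rw [← hNeq] at this
    have hpα : D.pair α lam = F := mul_right_cancel₀ (by rw [hNeq]; exact ne_of_gt hNα) this
    rw [hpα, hm2'] at hm1
    linarith

/-! ### The endgame contradiction -/

lemma endgame {μ0 ν0 y : V'} (hdom : D.Dominant μ0) (hν : ν0 ∈ D.Qpos) (hν0 : ν0 ≠ 0)
    (hy : y = μ0 + ν0) (hNN : D.NN y = D.NN μ0) : False := by
  have hyμ : y - μ0 = ν0 := by rw [hy]; abel
  have h1 : D.BB (y + μ0) (y - μ0) = D.NN y - D.NN μ0 := by
    rw [BB_add_left, BB_sub_right, BB_sub_right]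
    have := BB_symm (D := D) y μ0
    unfold NN
    linarith
  have h2 : D.BB (y - μ0) ν0 = D.BB (y + μ0) ν0 - 2 * D.BB μ0 ν0 := by
    rw [BB_sub_left, BB_add_left]
    ring
  have h3 : 0 ≤ D.BB μ0 ν0 := BB_dominant_Qpos hdom hν
  have h4 : D.NN ν0 ≤ 0 := by
    have : D.NN ν0 = D.BB (y - μ0) ν0 := by rw [hyμ]; rfl
    rw [this, h2]
    rw [hyμ] at h1
    rw [h1]
    linarith
  have h5 : D.NN ν0 = 0 := le_antisymm h4 (NN_nonneg _)
  have h6 : D.Rad ν0 := rad_of_NN_zero h5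
  have h7 : D.ht ν0 = 0 := h6.ht_zero
  exact hν0 (Qpos_eq_zero_of_ht hν h7)

/-! ### Core induction 1 : minuscule-type weights are minimal -/

lemma core1 {μ0 : V'} (hdomμ : D.Dominant μ0) :
    ∀ n : ℕ, ∀ y q : V', y ∈ D.X → q ∈ D.Qpos → D.ht q ≤ (n : ℝ) → y = μ0 + q →
      (∀ γ ∈ D.R, D.pair γ y ≤ 1) → D.NN y = D.NN μ0 := by
  intro n
  induction n with
  | zero =>
    intro y q hyX hq hht hyq hmin
    have h0 : D.ht q = 0 := le_antisymm (by exact_mod_cast hht) (Qpos_ht_nonneg hq)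
    rw [Qpos_eq_zero_of_ht hq h0, add_zero] at hyq
    rw [hyq]
  | succ n ih =>
    intro y q hyX hq hht hyq hmin
    by_cases hq0 : q = 0
    · rw [hq0, add_zero] at hyq; rw [hyq]
    · have hNq : 0 < D.NN q := by
        rcases lt_or_eq_of_le (NN_nonneg (D := D) q) with h | h
        · exact h
        · exfalso
          exact hq0 (Qpos_eq_zero_of_ht hq (rad_of_NN_zero h.symm).ht_zero)
      obtain ⟨ε, hεpos, hBqε, hqε⟩ := Qpos_supp hq q hNq
      have hεR : ε ∈ D.R := Rpos_subset hεpos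
      have hf := BB_coroot (D := D) hεR q
      have hNε := NN_coroot_pos (D := D) hεR
      have hppos : 0 < D.pair ε q := by
        rw [BB_symm] at hBqε
        nlinarith
      have hp1 : 1 ≤ D.pair ε q := (pair_int hεR (Qpos_subset_X hq)).one_le hppos
      have hpμ : 0 ≤ D.pair ε μ0 := hdomμ ε hεpos
      have hpy : D.pair ε y = D.pair ε μ0 + D.pair ε q := by rw [hyq, map_add]
      have hpy1 : D.pair ε y = 1 := le_antisymm (hmin ε hεR) (by linarith)
      have hy' : y - D.coroot ε = D.sV' ε y := by
        unfold sV'; rw [hpy1, one_smul]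
      refine Eq.trans ?_ (ih (y - D.coroot ε) (q - D.coroot ε)
        (D.X.sub_mem hyX (coroot_mem_X' hεR)) hqε ?_ ?_ ?_)
      · rw [hy', NN_sV' hεR]
      · rw [ht_sub]
        have := ht_coroot_ge_one (D := D) hεpos
        push_cast at hht ⊢
        linarith
      · rw [hyq]; abel
      · intro γ hγ
        rw [hy', pair_sV'_adj]
        exact hmin (D.sV ε γ) (sV_mem hεR hγ)

/-! ### Core induction 2 : coroots with singleton radical class -/

lemma core2 {μ0 : V'} (hdomμ : D.Dominant μ0) (hμ0 : μ0 ≠ 0) {γb : V} (hγbR : γb ∈ D.R)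
    (hshort : ∀ δ ∈ D.R, D.SameComponent δ γb → D.NN (D.coroot γb) ≤ D.NN (D.coroot δ)) :
    ∀ n : ℕ, ∀ (γy : V) (q : V'), γy ∈ D.R → q ∈ D.Qpos → D.ht q ≤ (n : ℝ) →
      D.SameComponent γy γb → D.NN (D.coroot γy) = D.NN (D.coroot γb) →
      (∀ δ ∈ D.R, D.Rad (D.coroot δ - D.coroot γy) → D.coroot δ = D.coroot γy) →
      D.coroot γy = μ0 + q → D.NN (D.coroot γy) = D.NN μ0 := by
  intro n
  induction n with
  | zero =>
    intro γy q hγyR hq hht _ _ _ hyq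
    have h0 : D.ht q = 0 := le_antisymm (by exact_mod_cast hht) (Qpos_ht_nonneg hq)
    rw [Qpos_eq_zero_of_ht hq h0, add_zero] at hyq
    rw [hyq]
  | succ n ih =>
    intro γy q hγyR hq hht hcomp hNb hsing hyq
    by_cases hq0 : q = 0
    · rw [hq0, add_zero] at hyq; rw [hyq]
    · have hNq : 0 < D.NN q := by
        rcases lt_or_eq_of_le (NN_nonneg (D := D) q) with h | h
        · exact h
        · exact absurd (Qpos_eq_zero_of_ht hq (rad_of_NN_zero h.symm).ht_zero) hq0
      obtain ⟨ε, hεpos, hBqε, hqε⟩ := Qpos_supp hq q hNq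
      have hεR : ε ∈ D.R := Rpos_subset hεpos
      have hfq := BB_coroot (D := D) hεR q
      have hNε := NN_coroot_pos (D := D) hεR
      have hNγy := NN_coroot_pos (D := D) hγyR
      have hppos : 0 < D.pair ε q := by
        rw [BB_symm] at hBqε
        nlinarith
      have hp1 : 1 ≤ D.pair ε q := (pair_int hεR (Qpos_subset_X hq)).one_le hppos
      have hpμ : 0 ≤ D.pair ε μ0 := hdomμ ε hεpos
      have hpy : D.pair ε (D.coroot γy) = D.pair ε μ0 + D.pair ε q := by rw [hyq, map_add]
      have hm1 : 1 ≤ D.pair ε (D.coroot γy) := by linarith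
      have hlinkεγy : D.Linked ε γy := ⟨hεR, hγyR, by linarith⟩
      have hcompε : D.SameComponent ε γb :=
        (hlinkεγy.sameComponent).trans'' hcomp
      have hNεb : D.NN (D.coroot γy) ≤ D.NN (D.coroot ε) := by
        rw [hNb]; exact hshort ε hεR hcompε
      have hBεγy : 0 < D.BB (D.coroot ε) (D.coroot γy) := by
        have hf := BB_coroot (D := D) hεR (D.coroot γy)
        nlinarith
      obtain ⟨hle2, hrad2⟩ := factA hεR hγyR hNεb hBεγy
      rcases (pair_coroot_int hεR hγyR).cases_le_two hle2 (by linarith) with hm1' | hm2'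
      · -- m = 1 : reflect
        obtain ⟨δy, hδyR, hδyc⟩ := D.reflect_coroot_mem ε hεR γy hγyR
        have hδyc' : D.coroot δy = D.coroot γy - D.coroot ε := by
          rw [hδyc, hm1', one_smul]
        have hδysV : D.coroot δy = D.sV' ε (D.coroot γy) := by rw [hδyc]; rfl
        have hNδy : D.NN (D.coroot δy) = D.NN (D.coroot γy) := by
          rw [hδysV, NN_sV' hεR]
        have hBγyε : 2 * D.BB (D.coroot ε) (D.coroot γy) = D.NN (D.coroot ε) := by
          have := BB_coroot (D := D) hεR (D.coroot γy)
          rw [hm1', one_mul] at this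
          exact this
        have hBδyε : D.BB (D.coroot δy) (D.coroot ε) ≠ 0 := by
          rw [hδyc', BB_sub_left]
          have h1 : D.BB (D.coroot γy) (D.coroot ε) = D.BB (D.coroot ε) (D.coroot γy) :=
            BB_symm _ _
          intro h0
          unfold NN at hBγyε hNε
          rw [h1] at h0
          have : D.BB (D.coroot ε) (D.coroot ε) = 0 := by linarith
          linarith
        have hlinkδyε : D.Linked δy ε := linked_of_BB hδyR hεR hBδyε
        have hcompδy : D.SameComponent δy γb :=
          (hlinkδyε.sameComponent).trans'' hcompε
        have hsing' : ∀ δ ∈ D.R, D.Rad (D.coroot δ - D.coroot δy) →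
            D.coroot δ = D.coroot δy := by
          intro δ hδR hzrad
          obtain ⟨δ'', hδ''R, hδ''c⟩ := D.reflect_coroot_mem ε hεR δ hδR
          have hpz : D.pair ε (D.coroot δ) = -1 := by
            have h1 : D.pair ε (D.coroot δ - D.coroot δy) = 0 :=
              hzrad ε hεR
            rw [map_sub] at h1
            have h2 : D.pair ε (D.coroot δy) = D.pair ε (D.coroot γy) - 2 := by
              rw [hδyc', map_sub, D.pair_self_eq_two ε hεR]
            rw [h2, hm1'] at h1
            linarith
          have hδ''eq : D.coroot δ'' = D.coroot δ + D.coroot ε := by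
            rw [hδ''c, hpz]
            rw [neg_smul, one_smul]
            abel
          have hrad'' : D.Rad (D.coroot δ'' - D.coroot γy) := by
            have : D.coroot δ'' - D.coroot γy = D.coroot δ - D.coroot δy := by
              rw [hδ''eq, hδyc']
              abel
            rw [this]
            exact hzrad
          have := hsing δ'' hδ''R hrad''
          rw [hδ''eq] at this
          rw [hδyc']
          have : D.coroot δ = D.coroot γy - D.coroot ε := by
            rw [← this]; abel
          exact this
        have hrec := ih δy (q - D.coroot ε) hδyR hqε ?_ hcompδy ?_ hsing' ?_
        · rw [← hNδy, hrec]
        · rw [ht_sub]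
          have := ht_coroot_ge_one (D := D) hεpos
          push_cast at hht ⊢
          linarith
        · rw [hNδy, hNb]
        · rw [hδyc', hyq]; abel
      · -- m = 2 : coroot ε = coroot γy, contradiction with μ0 ≠ 0
        obtain ⟨hradz, _⟩ := hrad2 hm2'
        have hεγy : D.coroot ε = D.coroot γy := by
          refine hsing ε hεR ?_
          have := hradz.neg
          simpa using this
        exfalso
        have hμeq : μ0 = -(q - D.coroot ε) := by
          rw [hεγy, hyq]; abel
        have hht0 : 0 ≤ D.ht μ0 := dominant_ht_nonneg hdomμ
        have hht1 : D.ht μ0 = - D.ht (q - D.coroot ε) := by rw [hμeq, ht_neg]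
        have hht2 : 0 ≤ D.ht (q - D.coroot ε) := Qpos_ht_nonneg hqε
        have hht3 : D.ht (q - D.coroot ε) = 0 := by linarith
        have := Qpos_eq_zero_of_ht hqε hht3
        rw [this] at hμeq
        rw [hμeq] at hμ0
        exact hμ0 (by norm_num)

/-! ### non-minimal elements have a witness -/

lemma not_mset_witness {lam : V'} (hX : lam ∈ D.X) (hdom : D.Dominant lam)
    (h0 : lam ≠ 0) (hnm : lam ∉ D.MSet) :
    ∃ μ0 : V', μ0 ∈ D.X ∧ D.Dominant μ0 ∧ μ0 ≠ 0 ∧ lam - μ0 ∈ D.Qpos ∧ lam - μ0 ≠ 0 := by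
  unfold MSet at hnm
  simp only [Set.mem_setOf_eq, not_and, not_forall] at hnm
  have h1 := hnm ⟨hX, hdom⟩ h0
  obtain ⟨ν, hν, hν0, hle, hne⟩ := h1
  exact ⟨ν, hν.1, hν.2, hν0, hle, fun h => hne (by
    have : lam = ν := by
      have := sub_eq_zero.1 h
      exact this
    exact this.symm)⟩

/-- GAP : a non-minimal dominant element pairs `≥ 2` with some root. -/
lemma gap {lam μ0 : V'} (hlamX : lam ∈ D.X) (hdomμ : D.Dominant μ0)
    (hq : lam - μ0 ∈ D.Qpos) (hq0 : lam - μ0 ≠ 0) :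
    ∃ γ ∈ D.R, 2 ≤ D.pair γ lam := by
  by_contra hbad
  push_neg at hbad
  have hmin : ∀ γ ∈ D.R, D.pair γ lam ≤ 1 := fun γ hγ =>
    (pair_int hγ hlamX).le_one (hbad γ hγ)
  have hn := Nat.le_ceil (D.ht (lam - μ0))
  have := core1 hdomμ (Nat.ceil (D.ht (lam - μ0))) lam (lam - μ0) hlamX hq hn
    (by abel) hmin
  exact endgame hdomμ hq hq0 (by abel) this

/-! ### Transfer: component-short coroots are short for every invariant inner product -/

lemma winv_coroot_formula (Bh : D.WInvInner) {γ : V} (hγ : γ ∈ D.R) (x : V') :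
    2 * Bh.form (D.coroot γ) x
      = D.pair γ x * Bh.form (D.coroot γ) (D.coroot γ) := by
  have hg : (D.reflV γ hγ, D.reflV' γ hγ) ∈ D.weyl :=
    Subgroup.subset_closure ⟨γ, hγ, rfl⟩
  have hinv := Bh.invariant _ hg (D.coroot γ) x
  have h1 : (D.reflV' γ hγ) (D.coroot γ) = - D.coroot γ := by
    unfold reflV'
    rw [Module.reflection_apply, D.pair_self_eq_two γ hγ, two_smul]
    abel
  have h2 : (D.reflV' γ hγ) x = x - D.pair γ x • D.coroot γ := by
    unfold reflV'
    rw [Module.reflection_apply]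
  dsimp only at hinv
  rw [h1, h2] at hinv
  rw [map_neg] at hinv
  simp only [LinearMap.neg_apply, map_sub, map_smul, smul_eq_mul] at hinv
  linarith

lemma sameComponent_ratio (Bh : D.WInvInner) {α β : V} (h : D.SameComponent α β) :
    α = β ∨ (α ∈ D.R ∧ β ∈ D.R ∧
      Bh.form (D.coroot α) (D.coroot α) * D.NN (D.coroot β)
        = Bh.form (D.coroot β) (D.coroot β) * D.NN (D.coroot α)) := by
  induction h with
  | rel x y hxy =>
    right
    obtain ⟨hxR, hyR, hu⟩ := hxy
    refine ⟨hxR, hyR, ?_⟩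
    have h1 := winv_coroot_formula Bh hxR (D.coroot y)
    have h2 := winv_coroot_formula Bh hyR (D.coroot x)
    have hBsymm := Bh.symm (D.coroot x) (D.coroot y)
    have hstar : D.pair x (D.coroot y) * Bh.form (D.coroot x) (D.coroot x)
        = D.pair y (D.coroot x) * Bh.form (D.coroot y) (D.coroot y) := by
      linarith
    have h1' := BB_coroot (D := D) hxR (D.coroot y)
    have h2' := BB_coroot (D := D) hyR (D.coroot x)
    have hBBsymm := BB_symm (D := D) (D.coroot x) (D.coroot y)
    have hstar' : D.pair x (D.coroot y) * D.NN (D.coroot x)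
        = D.pair y (D.coroot x) * D.NN (D.coroot y) := by
      linarith
    have hNx := NN_coroot_pos (D := D) hxR
    have hNy := NN_coroot_pos (D := D) hyR
    have hv : D.pair y (D.coroot x) ≠ 0 := by
      intro h0
      rw [h0, zero_mul] at hstar'
      exact hu (by
        rcases mul_eq_zero.1 hstar' with h | h
        · exact h
        · linarith)
    refine mul_left_cancel₀ hu ?_
    calc D.pair x (D.coroot y) * (Bh.form (D.coroot x) (D.coroot x) * D.NN (D.coroot y))
        = (D.pair x (D.coroot y) * Bh.form (D.coroot x) (D.coroot x)) * D.NN (D.coroot y) := by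
          ring
      _ = (D.pair y (D.coroot x) * Bh.form (D.coroot y) (D.coroot y)) * D.NN (D.coroot y) := by
          rw [hstar]
      _ = Bh.form (D.coroot y) (D.coroot y) * (D.pair y (D.coroot x) * D.NN (D.coroot y)) := by
          ring
      _ = Bh.form (D.coroot y) (D.coroot y) * (D.pair x (D.coroot y) * D.NN (D.coroot x)) := by
          rw [hstar']
      _ = D.pair x (D.coroot y) * (Bh.form (D.coroot y) (D.coroot y) * D.NN (D.coroot x)) := by
          ring
  | refl x => left; rfl
  | symm x y _ ih =>
    rcases ih with rfl | ⟨hxR, hyR, heq⟩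
    · left; rfl
    · right; exact ⟨hyR, hxR, heq.symm⟩
  | trans x y z _ _ ih1 ih2 =>
    rcases ih1 with rfl | ⟨hxR, hyR, heq1⟩
    · exact ih2
    · rcases ih2 with rfl | ⟨_, hzR, heq2⟩
      · right; exact ⟨hxR, hyR, heq1⟩
      · right
        refine ⟨hxR, hzR, ?_⟩
        have hNy := NN_coroot_pos (D := D) hyR
        refine mul_left_cancel₀ (ne_of_gt hNy) ?_
        calc D.NN (D.coroot y) * (Bh.form (D.coroot x) (D.coroot x) * D.NN (D.coroot z))
            = (Bh.form (D.coroot x) (D.coroot x) * D.NN (D.coroot y)) * D.NN (D.coroot z) := by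
              ring
          _ = (Bh.form (D.coroot y) (D.coroot y) * D.NN (D.coroot x)) * D.NN (D.coroot z) := by
              rw [heq1]
          _ = (Bh.form (D.coroot y) (D.coroot y) * D.NN (D.coroot z)) * D.NN (D.coroot x) := by
              ring
          _ = (Bh.form (D.coroot z) (D.coroot z) * D.NN (D.coroot y)) * D.NN (D.coroot x) := by
              rw [heq2]
          _ = D.NN (D.coroot y) * (Bh.form (D.coroot z) (D.coroot z) * D.NN (D.coroot x)) := by
              ring

lemma short_isShortCoroot {γ : V} (hγR : γ ∈ D.R)
    (hshort : ∀ δ ∈ D.R, D.SameComponent δ γ → D.NN (D.coroot γ) ≤ D.NN (D.coroot δ)) :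
    D.IsShortCoroot γ := by
  refine ⟨hγR, fun Bh α hαR hcomp => ?_⟩
  rcases sameComponent_ratio Bh hcomp with rfl | ⟨_, _, heq⟩
  · exact le_refl _
  · have hpos : 0 < Bh.form (D.coroot γ) (D.coroot γ) :=
      Bh.posdef _ (coroot_ne_zero hγR)
    have hN := hshort α hαR hcomp
    have hNγ := NN_coroot_pos (D := D) hγR
    nlinarith

/-! ### List sum helpers -/

lemma list_sum_get (L : List V) (f : V → V') :
    ∑ i : Fin L.length, f (L.get i) = (L.map f).sum := by
  induction L with
  | nil => simp
  | cons a t ih =>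
    have h := Fin.sum_univ_succ (fun i : Fin (t.length + 1) => f ((a::t).get i))
    simp only [List.length_cons] at *
    rw [h]
    simp [ih]

lemma list_sum_filter_take (L : List V) (f : V → V') : ∀ j : ℕ,
    ∑ i ∈ Finset.univ.filter (fun i : Fin L.length => (i : ℕ) < j), f (L.get i)
      = ((L.take j).map f).sum := by
  induction L with
  | nil => intro j; simp
  | cons a t ih =>
    intro j
    cases j with
    | zero => simp
    | succ j =>
      rw [Finset.sum_filter]
      have h := Fin.sum_univ_succ (fun i : Fin (t.length + 1) =>
        if (i : ℕ) < j + 1 then f ((a::t).get i) else 0)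
      simp only [List.length_cons] at *
      rw [h]
      rw [if_pos (show ((0 : Fin (t.length + 1)) : ℕ) < j + 1 from Nat.succ_pos j)]
      simp only [Fin.val_zero, Fin.val_succ]
      have hthis : ∀ i : Fin t.length,
          (if (i : ℕ) + 1 < j + 1 then f ((a::t).get i.succ) else 0)
          = (if (i : ℕ) < j then f (t.get i) else 0) := by
        intro i
        have hg : (a::t).get i.succ = t.get i := rfl
        rw [hg]
        by_cases hc : (i : ℕ) < j
        · rw [if_pos (by omega), if_pos hc]
        · rw [if_neg (by omega), if_neg hc]
      simp only [hthis]
      rw [← Finset.sum_filter, ih j]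
      rfl

/-! ### Main induction -/

lemma main_induction : ∀ n : ℕ, ∀ lam : V', lam ∈ D.X → D.Dominant lam → lam ≠ 0 →
    D.ht lam ≤ (n : ℝ) →
    ∃ μ ∈ D.MSet, ∃ L : List V, (∀ β ∈ L, D.IsShortCoroot β) ∧
      lam = μ + ((L.map D.coroot).sum) ∧
      (∀ j : ℕ, D.Dominant (μ + (((L.take j).map D.coroot).sum))) := by
  intro n
  induction n with
  | zero =>
    intro lam hX hdom h0 hht
    by_cases hM : lam ∈ D.MSet
    · refine ⟨lam, hM, [], by simp, by simp, fun j => by simpa using hdom⟩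
    · exfalso
      obtain ⟨μ0, hμX, hμdom, hμ0, hq, hq0⟩ := not_mset_witness hX hdom h0 hM
      have h1 : 0 ≤ D.ht μ0 := dominant_ht_nonneg hμdom
      have h2 : 0 ≤ D.ht (lam - μ0) := Qpos_ht_nonneg hq
      have h3 : D.ht (lam - μ0) ≠ 0 := fun h => hq0 (Qpos_eq_zero_of_ht hq h)
      have h4 : 0 < D.ht lam := by
        have : D.ht lam = D.ht μ0 + D.ht (lam - μ0) := by
          rw [← ht_add]
          congr 1
          abel
        rcases lt_or_eq_of_le h2 with h | h
        · linarith
        · exact absurd h.symm h3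
      have h5 : D.ht lam ≤ 0 := by exact_mod_cast hht
      linarith
  | succ n ih =>
    intro lam hX hdom h0 hht
    by_cases hM : lam ∈ D.MSet
    · refine ⟨lam, hM, [], by simp, by simp, fun j => by simpa using hdom⟩
    obtain ⟨μ0, hμX, hμdom, hμ0, hq, hq0⟩ := not_mset_witness hX hdom h0 hM
    have hgap := gap hX hμdom hq hq0
    obtain ⟨c, hcR, hc2, hcdom, hcshort⟩ := exists_dominant_step hX hdom hgap
    -- c is a positive root
    have hcpos : c ∈ D.Rpos := by
      by_contra hcneg
      have := neg_mem_Rpos hcR hcneg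
      have h1 := hdom (-c) this
      rw [pair_neg_left] at h1
      linarith
    by_cases hz : lam - D.coroot c = 0
    · -- lam equals the coroot c
      have hlamc : lam = D.coroot c := by
        have := sub_eq_zero.1 hz
        exact this
      by_cases h8a : ∃ δ ∈ D.R, D.Rad (D.coroot δ - D.coroot c) ∧ D.coroot δ ≠ D.coroot c
      · obtain ⟨δ, hδR, hδrad, hδne⟩ := h8a
        have hμrad : D.Rad (lam - D.coroot δ) := by
          have h1 := hδrad.neg
          have h2 : -(D.coroot δ - D.coroot c) = lam - D.coroot δ := by
            rw [hlamc]; abel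
          rw [h2] at h1
          exact h1
        have hμX' : lam - D.coroot δ ∈ D.X := D.X.sub_mem hX (coroot_mem_X' hδR)
        have hμne : lam - D.coroot δ ≠ 0 := by
          rw [hlamc]
          intro h
          exact hδne (by
            have := sub_eq_zero.1 h
            exact this.symm)
        have hμdom' : D.Dominant (lam - D.coroot δ) := by
          intro α hα
          rw [hμrad α (Rpos_subset hα)]
        have hμM : (lam - D.coroot δ) ∈ D.MSet := by
          refine ⟨⟨hμX', hμdom'⟩, hμne, ?_⟩
          intro ν hν hν0 hle
          unfold leQ at hle
          have hht1 : D.ht (lam - D.coroot δ) = 0 := hμrad.ht_zero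
          have hht2 : 0 ≤ D.ht ν := dominant_ht_nonneg hν.2
          have hht3 : D.ht (lam - D.coroot δ - ν) = 0 := by
            rw [ht_sub, hht1]
            have h4 := Qpos_ht_nonneg hle
            rw [ht_sub, hht1] at h4
            linarith
          have := Qpos_eq_zero_of_ht hle hht3
          have : ν = lam - D.coroot δ := by
            have h5 := sub_eq_zero.1 this
            exact h5.symm
          exact this
        -- δ is a short coroot
        have hNδc : D.NN (D.coroot δ) = D.NN (D.coroot c) := by
          have h1 : D.coroot δ = D.coroot c + (D.coroot δ - D.coroot c) := by abel
          rw [h1, hδrad.NN_add]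
        have hlinkδc : D.Linked δ c := by
          refine linked_of_BB hδR hcR ?_
          have h1 : D.coroot δ = D.coroot c + (D.coroot δ - D.coroot c) := by abel
          rw [h1, BB_add_left, hδrad.BB_zero]
          have := NN_coroot_pos (D := D) hcR
          unfold NN at this
          intro h
          rw [add_zero] at h
          linarith
        have hδshort : ∀ ρ ∈ D.R, D.SameComponent ρ δ →
            D.NN (D.coroot δ) ≤ D.NN (D.coroot ρ) := by
          intro ρ hρR hρcomp
          rw [hNδc]
          exact hcshort ρ hρR (hρcomp.trans'' hlinkδc.sameComponent)
        refine ⟨lam - D.coroot δ, hμM, [δ], ?_, ?_, ?_⟩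
        · intro β hβ
          rw [List.mem_singleton] at hβ
          rw [hβ]
          exact short_isShortCoroot hδR hδshort
        · simp
        · intro j
          cases j with
          | zero => simpa using hμdom'
          | succ j =>
            have : ([δ].take (j+1)) = [δ] := by simp
            rw [this]
            simp only [List.map_cons, List.map_nil, List.sum_cons, List.sum_nil, add_zero]
            have : lam - D.coroot δ + D.coroot δ = lam := by abel
            rw [this]
            exact hdom
      · -- singleton radical class : contradiction via core2
        exfalso
        push_neg at h8a
        have hsing : ∀ δ ∈ D.R, D.Rad (D.coroot δ - D.coroot c) →
            D.coroot δ = D.coroot c := h8a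
        have hcore := core2 hμdom hμ0 hcR hcshort
          (Nat.ceil (D.ht (lam - μ0))) c (lam - μ0) hcR hq
          (Nat.le_ceil _) (SameComponent.refl' c) rfl hsing
          (by rw [← hlamc]; abel)
        rw [← hlamc] at hcore
        exact endgame hμdom hq hq0 (by abel) hcore
    · -- recurse on lam - coroot c
      have hX' : lam - D.coroot c ∈ D.X := D.X.sub_mem hX (coroot_mem_X' hcR)
      have hht' : D.ht (lam - D.coroot c) ≤ (n : ℝ) := by
        rw [ht_sub]
        have := ht_coroot_ge_one (D := D) hcpos
        push_cast at hht ⊢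
        linarith
      obtain ⟨μ, hμM, L, hLshort, hLsum, hLdom⟩ := ih (lam - D.coroot c) hX' hcdom hz hht'
      refine ⟨μ, hμM, L ++ [c], ?_, ?_, ?_⟩
      · intro β hβ
        rw [List.mem_append] at hβ
        rcases hβ with hβ | hβ
        · exact hLshort β hβ
        · rw [List.mem_singleton] at hβ
          rw [hβ]
          exact short_isShortCoroot hcR hcshort
      · rw [List.map_append, List.sum_append]
        simp only [List.map_cons, List.map_nil, List.sum_cons, List.sum_nil, add_zero]
        have : lam - D.coroot c = μ + (List.map D.coroot L).sum := hLsum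
        have hgoal : lam = (lam - D.coroot c) + D.coroot c := by abel
        rw [hgoal, this]
        abel
      · intro j
        by_cases hj : j ≤ L.length
        · rw [List.take_append_of_le_length hj]
          exact hLdom j
        · push_neg at hj
          have h1 : (L ++ [c]).take j = L ++ [c] := by
            apply List.take_of_length_le
            rw [List.length_append, List.length_singleton]
            omega
          rw [h1, List.map_append, List.sum_append]
          simp only [List.map_cons, List.map_nil, List.sum_cons, List.sum_nil, add_zero]
          have h2 : μ + ((List.map D.coroot L).sum + D.coroot c) = lam := by
            have : lam - D.coroot c = μ + (List.map D.coroot L).sum := hLsum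
            have hgoal : lam = (lam - D.coroot c) + D.coroot c := by abel
            rw [hgoal, this]
            abel
          rw [h2]
          exact hdom

end RootSystemData

theorem dominant_chain_from_M_by_short_coroots {V V' : Type} [AddCommGroup V] [Module ℝ V] [FiniteDimensional ℝ V]
    [AddCommGroup V'] [Module ℝ V'] [FiniteDimensional ℝ V']
    (D : RootSystemData V V')
    (lam : V') (hlam : lam ∈ D.Xplus) (h0 : lam ≠ 0) :
    ∃ μ ∈ D.MSet, ∃ (k : ℕ) (β : Fin k → V),
      (∀ i, D.IsShortCoroot (β i)) ∧
      lam = μ + ∑ i, D.coroot (β i) ∧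
      ∀ j : ℕ, j ≤ k →
        D.Dominant (μ + ∑ i ∈ Finset.univ.filter (fun i : Fin k => (i : ℕ) < j),
          D.coroot (β i)) := by
  obtain ⟨hX, hdom⟩ := hlam
  obtain ⟨μ, hμM, L, hLshort, hLsum, hLdom⟩ :=
    D.main_induction (Nat.ceil (D.ht lam)) lam hX hdom h0 (Nat.le_ceil _)
  refine ⟨μ, hμM, L.length, fun i => L.get i, ?_, ?_, ?_⟩
  · intro i
    exact hLshort _ (L.get_mem i)
  · rw [RootSystemData.list_sum_get]
    exact hLsum
  · intro j _
    rw [RootSystemData.list_sum_filter_take]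
    exact hLdom j

end
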